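/- Let K be a field of characteristic 0, n ∈ ℕ, W the n-th Weyl algebra over K, w ∈ W, ν ∈ ℕ₀^{2n}, and ω ∈ Ω. Then for all s ∈ ℕ with s > deg^ν(w) − deg^ν(σ^ω(w)) it holds deg^ν(σ^ω(w)) + s·deg^ω(w) = deg^{ν+sω}(w), where deg^ν(σ^ω(w)) is computed in K[X,Y] via the identification ψ^ω. -/

import Mathlib

open MvPolynomial

set_option maxHeartbeats 1000000
set_option synthInstance.maxHeartbeats 400000

namespace WeylPaper

variable (K : Type) [Field K] [CharZero K] (n : ℕ)

/-- `K[X_1,…,X_n]`, the polynomial ring on which the Weyl algebra acts. -/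
abbrev PolyN := MvPolynomial (Fin n) K

/-- `K[X,Y] = K[X_1,…,X_n,Y_1,…,Y_n]`, with the `X`-variables indexed by `Sum.inl`
and the `Y`-variables indexed by `Sum.inr`. -/
abbrev KXY := MvPolynomial (Fin n ⊕ Fin n) K

/-- Exponent vectors `(λ,μ) ∈ ℕ₀ⁿ × ℕ₀ⁿ`. -/
abbrev Exps := (Fin n ⊕ Fin n) →₀ ℕ

/-- The operator `ξ_i : p ↦ X_i · p` on `K[X]`. -/
noncomputable def xiOp (i : Fin n) : Module.End K (PolyN K n) :=
  LinearMap.mulLeft K (X i)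

/-- The operator `∂_i = ∂/∂X_i` on `K[X]`. -/
noncomputable def delOp (i : Fin n) : Module.End K (PolyN K n) :=
  (pderiv i).toLinearMap

/-- The `n`-th Weyl algebra over `K`, as the `K`-subalgebra of `End_K K[X]`
generated by `ξ_1,…,ξ_n,∂_1,…,∂_n`. -/
noncomputable def weylAlg : Subalgebra K (Module.End K (PolyN K n)) :=
  Algebra.adjoin K (Set.range (xiOp K n) ∪ Set.range (delOp K n))

/-- The normal monomial `ξ^λ ∂^μ`, encoded by `γ = (λ,μ) : Exps n`. -/
noncomputable def wmono (γ : Exps n) : Module.End K (PolyN K n) :=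
  (List.ofFn fun i : Fin n => xiOp K n i ^ γ (Sum.inl i)).prod *
    (List.ofFn fun i : Fin n => delOp K n i ^ γ (Sum.inr i)).prod

/-- The weight `ω·(λ⃗μ)` of an exponent vector. -/
def wt (ω : Fin n ⊕ Fin n → ℕ) (γ : Exps n) : ℕ :=
  γ.sum fun j k => ω j * k

/-- The natural polynomial region `Ω`: all weight vectors `ω ∈ ℕ₀^{2n}` with
`ω_i + ω_{n+i} > 0` for all `i`. -/
def inOmega (ω : Fin n ⊕ Fin n → ℕ) : Prop :=
  ∀ i : Fin n, 0 < ω (Sum.inl i) + ω (Sum.inr i)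

variable {K n}
variable (b : Module.Basis (Exps n) K (weylAlg K n))

/-- The statement that the normal monomials `ξ^λ∂^μ` are the given `K`-basis of `W`. -/
def IsMonomialBasis : Prop :=
  ∀ γ : Exps n, (↑(b γ) : Module.End K (PolyN K n)) = wmono K n γ

/-- The support of `w ∈ W`: exponents occurring in the canonical form of `w`. -/
noncomputable def wsupp (w : weylAlg K n) : Finset (Exps n) :=
  (b.repr w).support

/-- The `ω`-degree of `w ∈ W`, an element of `ℤ ∪ {-∞}`. -/
noncomputable def wdeg (ω : Fin n ⊕ Fin n → ℕ) (w : weylAlg K n) : WithBot ℤ :=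
  (b.repr w).support.sup fun γ => ((wt n ω γ : ℤ) : WithBot ℤ)

/-- The `ω`-degree filtration `F^ω_i W = {w : deg^ω w ≤ i}` of the Weyl algebra. -/
noncomputable def FW (ω : Fin n ⊕ Fin n → ℕ) (i : ℤ) : Submodule K (weylAlg K n) :=
  Submodule.comap b.repr.toLinearMap
    (Finsupp.supported K K {γ : Exps n | (wt n ω γ : ℤ) ≤ i})

/-- The `i`-th `ω`-symbol `σ^ω_i(w)`, i.e. the part of (the canonical form of) `w`
of `ω`-weight exactly `i`, regarded as an element of `K[X,Y]` via `ψ^ω`. -/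
noncomputable def symbAt (ω : Fin n ⊕ Fin n → ℕ) (i : ℤ) (w : weylAlg K n) : KXY K n :=
  ∑ γ ∈ (b.repr w).support.filter (fun γ => (wt n ω γ : ℤ) = i),
    monomial γ (b.repr w γ)

/-- The `ω`-symbol `σ^ω(w)`: the part of `w` of highest `ω`-weight, regarded as an
element of `K[X,Y]` via `ψ^ω`; `σ^ω(0) = 0`. -/
noncomputable def symb (ω : Fin n ⊕ Fin n → ℕ) (w : weylAlg K n) : KXY K n :=
  ∑ γ ∈ (b.repr w).support.filter
      (fun γ => ((wt n ω γ : ℤ) : WithBot ℤ) = wdeg b ω w),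
    monomial γ (b.repr w γ)

variable (n) in
/-- The `ν`-degree of a polynomial in `K[X,Y]`, an element of `ℤ ∪ {-∞}`. -/
noncomputable def pdeg (ν : Fin n ⊕ Fin n → ℕ) (p : KXY K n) : WithBot ℤ :=
  p.support.sup fun γ => ((wt n ν γ : ℤ) : WithBot ℤ)

variable (n) in
/-- The `ν`-degree filtration `F^ν_i K[X,Y]`. -/
noncomputable def FP (ν : Fin n ⊕ Fin n → ℕ) (i : ℤ) : Submodule K (KXY K n) where
  carrier := {p | ∀ γ ∈ p.support, (wt n ν γ : ℤ) ≤ i}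
  add_mem' := by
    intro p q hp hq γ hγ
    rcases Finset.mem_union.mp (MvPolynomial.support_add hγ) with h | h
    exacts [hp γ h, hq γ h]
  zero_mem' := by simp
  smul_mem' := by
    intro c p hp γ hγ
    exact hp γ (MvPolynomial.support_smul hγ)

variable (n) in
/-- The `i`-th `ν`-symbol `τ^ν_i(p)` of a polynomial: its part of `ν`-weight exactly `i`,
regarded as an element of `K[X,Y]` via the identification `Gr^ν K[X,Y] ≅ K[X,Y]`. -/
noncomputable def psymbAt (ν : Fin n ⊕ Fin n → ℕ) (i : ℤ) (p : KXY K n) : KXY K n :=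
  ∑ γ ∈ p.support.filter (fun γ => (wt n ν γ : ℤ) = i), monomial γ (coeff γ p)

variable (n) in
/-- The `ν`-symbol (leading `ν`-form) `τ^ν(p)` of a polynomial; `τ^ν(0) = 0`. -/
noncomputable def psymb (ν : Fin n ⊕ Fin n → ℕ) (p : KXY K n) : KXY K n :=
  ∑ γ ∈ p.support.filter (fun γ => ((wt n ν γ : ℤ) : WithBot ℤ) = pdeg n ν p),
    monomial γ (coeff γ p)

/-- The ideal `Gr^ω L` of `K[X,Y]` associated to a left ideal `L` of `W`:
it is generated (indeed spanned) by the `ω`-symbols of the elements of `L`. -/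
noncomputable def grW (ω : Fin n ⊕ Fin n → ℕ)
    (L : Submodule (weylAlg K n) (weylAlg K n)) : Ideal (KXY K n) :=
  Ideal.span (symb b ω '' L)

variable (n) in
/-- The ideal `Gr^ν I` of `K[X,Y]` associated to an ideal `I` of `K[X,Y]`:
it is generated (indeed spanned) by the `ν`-symbols of the elements of `I`. -/
noncomputable def grP (ν : Fin n ⊕ Fin n → ℕ) (I : Ideal (KXY K n)) : Ideal (KXY K n) :=
  Ideal.span (psymb n ν '' I)


/-- A normal ordering (term ordering) on exponent vectors. -/
structure NormalOrdering (n : ℕ) where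
  le : Exps n → Exps n → Prop
  refl : ∀ γ, le γ γ
  trans : ∀ {γ δ ε}, le γ δ → le δ ε → le γ ε
  antisymm : ∀ {γ δ}, le γ δ → le δ γ → γ = δ
  total : ∀ γ δ, le γ δ ∨ le δ γ
  bot : ∀ γ, le 0 γ
  compat : ∀ {γ δ} (α), le γ δ → le (γ + α) (δ + α)

theorem wt_zero (ν : Fin n ⊕ Fin n → ℕ) : wt n ν 0 = 0 :=
  Finsupp.sum_zero_index

theorem wt_add (ν : Fin n ⊕ Fin n → ℕ) (γ δ : Exps n) :
    wt n ν (γ + δ) = wt n ν γ + wt n ν δ :=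
  Finsupp.sum_add_index' (fun j => mul_zero (ν j)) (fun j k l => mul_add (ν j) k l)

/-- The normal ordering `≼_ν` induced by a weight `ν` and a normal ordering `≼`:
compare first by `ν`-weight, break ties by `≼`. -/
def NormalOrdering.induced (o : NormalOrdering n) (ν : Fin n ⊕ Fin n → ℕ) :
    NormalOrdering n where
  le γ δ := wt n ν γ < wt n ν δ ∨ (wt n ν γ = wt n ν δ ∧ o.le γ δ)
  refl γ := Or.inr ⟨rfl, o.refl γ⟩
  trans := by
    rintro γ δ ε (h | ⟨h, h'⟩) (g | ⟨g, g'⟩)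
    · exact Or.inl (h.trans g)
    · exact Or.inl (g ▸ h)
    · exact Or.inl (h ▸ g)
    · exact Or.inr ⟨h.trans g, o.trans h' g'⟩
  antisymm := by
    rintro γ δ (h | ⟨h, h'⟩) (g | ⟨g, g'⟩)
    · omega
    · omega
    · omega
    · exact o.antisymm h' g'
  total := by
    intro γ δ
    rcases Nat.lt_trichotomy (wt n ν γ) (wt n ν δ) with h | h | h
    · exact Or.inl (Or.inl h)
    · rcases o.total γ δ with h' | h'
      · exact Or.inl (Or.inr ⟨h, h'⟩)
      · exact Or.inr (Or.inr ⟨h.symm, h'⟩)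
    · exact Or.inr (Or.inl h)
  bot := by
    intro γ
    rcases Nat.eq_zero_or_pos (wt n ν γ) with h | h
    · exact Or.inr ⟨by rw [wt_zero, h], o.bot γ⟩
    · exact Or.inl (by rw [wt_zero]; exact h)
  compat := by
    rintro γ δ α (h | ⟨h, h'⟩)
    · exact Or.inl (by rw [wt_add, wt_add]; omega)
    · exact Or.inr ⟨by rw [wt_add, wt_add, h], o.compat α h'⟩

variable (b : Module.Basis (Exps n) K (weylAlg K n))

/-- `γ` is the `≼`-leading exponent of `w ∈ W`. -/
def IsLeadExpW (o : NormalOrdering n) (w : weylAlg K n) (γ : Exps n) : Prop :=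
  γ ∈ (b.repr w).support ∧ ∀ δ ∈ (b.repr w).support, o.le δ γ

/-- The leading term ideal `LT_≼(S) ⊆ K[X,Y]` of a set `S ⊆ W`. -/
noncomputable def ltIdealW (o : NormalOrdering n) (S : Set (weylAlg K n)) :
    Ideal (KXY K n) :=
  Ideal.span {q | ∃ w ∈ S, w ≠ 0 ∧ ∃ γ, IsLeadExpW b o w γ ∧
    q = MvPolynomial.monomial γ (1 : K)}

variable (n) in
/-- `γ` is the `≼`-leading exponent of a polynomial `p ∈ K[X,Y]`. -/
def IsLeadExpP (o : NormalOrdering n) (p : KXY K n) (γ : Exps n) : Prop :=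
  γ ∈ p.support ∧ ∀ δ ∈ p.support, o.le δ γ

variable (n) in
/-- The leading term ideal `LT_≼(S) ⊆ K[X,Y]` of a set `S ⊆ K[X,Y]`. -/
noncomputable def ltIdealP (o : NormalOrdering n) (S : Set (KXY K n)) :
    Ideal (KXY K n) :=
  Ideal.span {q | ∃ p ∈ S, p ≠ 0 ∧ ∃ γ, IsLeadExpP n o p γ ∧
    q = MvPolynomial.monomial γ (1 : K)}

/-- `B` is a `≼`-Gröbner basis of the left ideal `L ⊆ W`. -/
def IsGroebnerW (o : NormalOrdering n) (L : Submodule (weylAlg K n) (weylAlg K n))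
    (B : Finset (weylAlg K n)) : Prop :=
  (B : Set (weylAlg K n)) ⊆ L ∧
    Submodule.span (weylAlg K n) (B : Set (weylAlg K n)) = L ∧
    ltIdealW b o L = ltIdealW b o B

/-- `U` is a universal Gröbner basis of the left ideal `L ⊆ W`. -/
def IsUnivGroebnerW (L : Submodule (weylAlg K n) (weylAlg K n))
    (U : Finset (weylAlg K n)) : Prop :=
  ∀ o : NormalOrdering n, IsGroebnerW b o L U

variable (n) in
/-- `B` is a `≼`-Gröbner basis of the ideal `I ⊆ K[X,Y]`. -/
def IsGroebnerP (o : NormalOrdering n) (I : Ideal (KXY K n))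
    (B : Finset (KXY K n)) : Prop :=
  (B : Set (KXY K n)) ⊆ I ∧
    Ideal.span (B : Set (KXY K n)) = I ∧
    ltIdealP n o (I : Set (KXY K n)) = ltIdealP n o B

section Modules

variable {M : Type} [AddCommGroup M] [Module (weylAlg K n) M]

/-- `FM` is a good `F^ω W`-filtration of the left `W`-module `M`. -/
def IsGoodFiltrationW (ω : Fin n ⊕ Fin n → ℕ) (FM : ℤ → AddSubgroup M) : Prop :=
  (∀ m : M, ∃ i, m ∈ FM i) ∧
  ∃ (t : ℕ) (g : Fin t → M) (p : Fin t → ℤ), ∀ i : ℤ,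
    FM i = ⨆ j : Fin t, ((FW b ω (i - p j)).toAddSubgroup (M := weylAlg K n)).map
      ((smulAddHom (weylAlg K n) M).flip (g j))

/-- A realization of the associated graded module `Gr^ω M` of `(M, F^ω M)` as a
`K[X,Y]`-module `G` (via the identification `ψ^ω : K[X,Y] ≅ Gr^ω W`):
`emb i` sends `x ∈ F^ω_i M` to its symbol `σ_i(x) ∈ Gr^ω_i M ⊆ G`. -/
structure GrRealW (ω : Fin n ⊕ Fin n → ℕ) (FM : ℤ → AddSubgroup M)
    (G : ModuleCat (KXY K n)) where
  emb : ∀ i : ℤ, FM i →+ G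
  emb_eq_zero_iff : ∀ (i : ℤ) (x : FM i), emb i x = 0 ↔ (x : M) ∈ FM (i - 1)
  emb_smul : ∀ (i j : ℤ) (w : weylAlg K n), w ∈ FW b ω i → ∀ (m : M) (hm : m ∈ FM j)
      (hm' : w • m ∈ FM (i + j)),
      symbAt b ω i w • emb j ⟨m, hm⟩ = emb (i + j) ⟨w • m, hm'⟩
  internal : DirectSum.IsInternal fun i : ℤ => (emb i).range

end Modules

section PolyModules

variable {G : Type} [AddCommGroup G] [Module (KXY K n) G]

variable (n) in
/-- `FG` is a good `F^ν K[X,Y]`-filtration of the `K[X,Y]`-module `G`. -/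
def IsGoodFiltrationP (ν : Fin n ⊕ Fin n → ℕ) (FG : ℤ → AddSubgroup G) : Prop :=
  (∀ x : G, ∃ i, x ∈ FG i) ∧
  ∃ (t : ℕ) (g : Fin t → G) (p : Fin t → ℤ), ∀ i : ℤ,
    FG i = ⨆ j : Fin t, ((FP n ν (i - p j)).toAddSubgroup).map
      ((smulAddHom (KXY K n) G).flip (g j))

variable (n) in
/-- A realization of the associated graded module `Gr^ν G` of a filtered
`K[X,Y]`-module `(G, F^ν G)` as a `K[X,Y]`-module `H`
(via the identification `Gr^ν K[X,Y] ≅ K[X,Y]`). -/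
structure GrRealP (ν : Fin n ⊕ Fin n → ℕ) (FG : ℤ → AddSubgroup G)
    (H : ModuleCat (KXY K n)) where
  emb : ∀ i : ℤ, FG i →+ H
  emb_eq_zero_iff : ∀ (i : ℤ) (x : FG i), emb i x = 0 ↔ (x : G) ∈ FG (i - 1)
  emb_smul : ∀ (i j : ℤ) (q : KXY K n), q ∈ FP n ν i → ∀ (x : G) (hx : x ∈ FG j)
      (hx' : q • x ∈ FG (i + j)),
      psymbAt n ν i q • emb j ⟨x, hx⟩ = emb (i + j) ⟨q • x, hx'⟩
  internal : DirectSum.IsInternal fun i : ℤ => (emb i).range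

end PolyModules

/-- A realization of the associated graded ring `Gr^ω W` as a `K`-algebra `A`:
`emb i` sends `w ∈ F^ω_i W` to its symbol `σ^ω_i(w) ∈ Gr^ω_i W ⊆ A`. -/
structure GrRingRealW (ω : Fin n ⊕ Fin n → ℕ) (A : Type) [Ring A] [Algebra K A] where
  emb : ∀ i : ℤ, FW b ω i →ₗ[K] A
  emb_eq_zero_iff : ∀ (i : ℤ) (x : FW b ω i),
    emb i x = 0 ↔ (x : weylAlg K n) ∈ FW b ω (i - 1)
  emb_mul : ∀ (i j : ℤ) (x : FW b ω i) (y : FW b ω j)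
      (h : (x : weylAlg K n) * (y : weylAlg K n) ∈ FW b ω (i + j)),
      emb i x * emb j y = emb (i + j) ⟨(x : weylAlg K n) * y, h⟩
  emb_one : ∀ h : (1 : weylAlg K n) ∈ FW b ω 0, emb 0 ⟨1, h⟩ = 1
  internal : DirectSum.IsInternal fun i : ℤ => LinearMap.range (emb i)

end WeylPaper

open WeylPaper MvPolynomial in
/-- `wt` of a combined weight vector. -/
theorem wt_combine {n : ℕ} (ν ω : Fin n ⊕ Fin n → ℕ) (s : ℕ) (γ : Exps n) :
    wt n (fun j => ν j + s * ω j) γ = wt n ν γ + s * wt n ω γ := by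
  simp [wt, Finsupp.sum, add_mul, Finset.sum_add_distrib, Finset.mul_sum, mul_assoc]

/-- Casting commutes with `Finset.sup` on nonempty sets. -/
theorem sup_natCast_withBot {β : Type*} (S : Finset β) (hS : S.Nonempty) (f : β → ℕ) :
    S.sup (fun γ => ((f γ : ℤ) : WithBot ℤ)) = (((S.sup' hS f : ℕ) : ℤ) : WithBot ℤ) := by
  rw [← Finset.sup'_eq_sup hS]
  have hmono : Monotone (fun k : ℕ => ((k : ℤ) : WithBot ℤ)) := by
    intro a b hab
    exact WithBot.coe_le_coe.mpr (Int.ofNat_le.mpr hab)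
  exact (Finset.comp_sup'_eq_sup'_comp hS (fun k : ℕ => ((k : ℤ) : WithBot ℤ))
    (fun x y => hmono.map_max)).symm

theorem nsmul_coe_withBot (s : ℕ) (x : ℤ) :
    s • ((x : WithBot ℤ)) = ((s • x : ℤ) : WithBot ℤ) := by
  induction s with
  | zero => simp
  | succ k ih => rw [succ_nsmul, succ_nsmul, ih, WithBot.coe_add]

open WeylPaper MvPolynomial in
/-- The support of a sum of monomials indexed by a subset of the support of `b.repr w`. -/
theorem support_sum_monomial {n : ℕ} {K : Type} [Field K] [CharZero K]
    (b : Module.Basis (Exps n) K (weylAlg K n)) (w : weylAlg K n) (T : Finset (Exps n))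
    (hT : T ⊆ (b.repr w).support) :
    (∑ γ ∈ T, (monomial γ (b.repr w γ) : KXY K n)).support = T := by
  ext δ
  rw [MvPolynomial.mem_support_iff]
  have : MvPolynomial.coeff δ (∑ γ ∈ T, (monomial γ (b.repr w γ) : KXY K n)) =
      if δ ∈ T then b.repr w δ else 0 := by
    rw [MvPolynomial.coeff_sum]
    simp_rw [MvPolynomial.coeff_monomial]
    exact Finset.sum_ite_eq' T δ _
  rw [this]
  constructor
  · intro h
    by_contra hδ
    simp [hδ] at h
  · intro h
    have := Finsupp.mem_support_iff.mp (hT h)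
    simp [h, this]

open WeylPaper MvPolynomial in
/-- for all `s ∈ ℕ` with `s > deg^ν(w) - deg^ν(σ^ω(w))` one has
`deg^ν(σ^ω(w)) + s·deg^ω(w) = deg^{ν+sω}(w)` (in `ℤ ∪ {-∞}`; for `w = 0` both sides
are `-∞` and the claim holds for every `s`). -/
theorem statement_4 (n : ℕ) (hn : 0 < n) (K : Type) [Field K] [CharZero K]
    (b : Module.Basis (Exps n) K (weylAlg K n)) (hb : IsMonomialBasis b)
    (w : weylAlg K n) (ν : Fin n ⊕ Fin n → ℕ) (ω : Fin n ⊕ Fin n → ℕ) (hω : inOmega n ω) :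
    ∀ s : ℕ, 0 < s →
      (w = 0 ∨ wdeg b ν w < ((s : ℤ) : WithBot ℤ) + pdeg n ν (symb b ω w)) →
      pdeg n ν (symb b ω w) + s • wdeg b ω w = wdeg b (fun j => ν j + s * ω j) w := by
  intro s hs hyp
  rcases eq_or_ne w 0 with rfl | hw
  · simp only [wdeg, symb, pdeg, map_zero, Finsupp.support_zero, Finset.filter_empty,
      Finset.sum_empty, Finset.sup_empty]
    have : MvPolynomial.support (0 : KXY K n) = ∅ := MvPolynomial.support_zero
    rw [this]
    simp
  -- nonzero case
  have hyp' := hyp.resolve_left hw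
  set S := (b.repr w).support with hSdef
  have hS : S.Nonempty := by
    rw [hSdef, Finsupp.support_nonempty_iff]
    simpa using hw
  set f : Exps n → ℕ := fun γ => wt n ω γ with hf
  set g : Exps n → ℕ := fun γ => wt n ν γ with hg
  set D : ℕ := S.sup' hS f with hD
  have hwdegω : wdeg b ω w = ((D : ℤ) : WithBot ℤ) := sup_natCast_withBot S hS f
  -- the filtered set
  set T : Finset (Exps n) := S.filter
      (fun γ => ((wt n ω γ : ℤ) : WithBot ℤ) = wdeg b ω w) with hTdef
  have hTeq : T = S.filter (fun γ => f γ = D) := by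
    rw [hTdef]
    apply Finset.filter_congr
    intro γ _
    rw [hwdegω]
    constructor
    · intro h; exact_mod_cast h
    · intro h; exact_mod_cast congrArg (fun k : ℕ => ((k : ℤ) : WithBot ℤ)) h
  have hTsub : T ⊆ S := Finset.filter_subset _ _
  have hT : T.Nonempty := by
    obtain ⟨γ₀, hγ₀, hγ₀eq⟩ := Finset.exists_mem_eq_sup' hS f
    exact ⟨γ₀, hTeq ▸ Finset.mem_filter.mpr ⟨hγ₀, hγ₀eq.symm⟩⟩
  have hsymb : symb b ω w = ∑ γ ∈ T, MvPolynomial.monomial γ (b.repr w γ) := rfl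
  have hsupp : (symb b ω w).support = T := by
    rw [hsymb]; exact support_sum_monomial b w T hTsub
  set E : ℕ := T.sup' hT g with hE
  have hpdeg : pdeg n ν (symb b ω w) = ((E : ℤ) : WithBot ℤ) := by
    rw [pdeg, hsupp]; exact sup_natCast_withBot T hT g
  set Gν : ℕ := S.sup' hS g with hGν
  have hwdegν : wdeg b ν w = ((Gν : ℤ) : WithBot ℤ) := sup_natCast_withBot S hS g
  -- translate the hypothesis
  have hypN : Gν < s + E := by
    rw [hwdegν, hpdeg] at hyp'
    have : ((Gν : ℤ) : WithBot ℤ) < (((s + E : ℕ) : ℤ) : WithBot ℤ) := by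
      rw [show (((s + E : ℕ) : ℤ) : WithBot ℤ) = ((s : ℤ) : WithBot ℤ) + ((E : ℤ) : WithBot ℤ)
        by rw [Nat.cast_add, WithBot.coe_add]]
      exact hyp'
    exact_mod_cast this
  -- RHS
  have hwdegR : wdeg b (fun j => ν j + s * ω j) w =
      (((S.sup' hS (fun γ => g γ + s * f γ) : ℕ) : ℤ) : WithBot ℤ) := by
    rw [wdeg]
    have := sup_natCast_withBot S hS (fun γ => g γ + s * f γ)
    rw [← this]
    apply Finset.sup_congr rfl
    intro γ _
    rw [wt_combine]
  rw [hpdeg, hwdegω, hwdegR, nsmul_coe_withBot]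
  rw [← WithBot.coe_add, WithBot.coe_inj]
  have key : E + s * D = S.sup' hS (fun γ => g γ + s * f γ) := by
    apply le_antisymm
    · obtain ⟨γ₀, hγ₀T, hγ₀eq⟩ := Finset.exists_mem_eq_sup' hT g
      have hγ₀S : γ₀ ∈ S := hTsub hγ₀T
      have hγ₀T' : γ₀ ∈ S.filter (fun γ => f γ = D) := by rw [← hTeq]; exact hγ₀T
      have hfγ₀ : f γ₀ = D := (Finset.mem_filter.mp hγ₀T').2
      calc E + s * D = g γ₀ + s * f γ₀ := by rw [← hγ₀eq, hfγ₀]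
        _ ≤ _ := Finset.le_sup' (fun γ => g γ + s * f γ) hγ₀S
    · apply Finset.sup'_le
      intro γ hγ
      have hgγ : g γ < s + E := lt_of_le_of_lt (Finset.le_sup' g hγ) hypN
      rcases eq_or_lt_of_le (Finset.le_sup' f hγ : f γ ≤ D) with hfγ | hfγ
      · have hγT : γ ∈ T := by rw [hTeq]; exact Finset.mem_filter.mpr ⟨hγ, hfγ⟩
        have h1 : g γ ≤ E := Finset.le_sup' g hγT
        have h3 : s * f γ = s * D := by rw [hfγ]
        omega
      · have h2 : s * f γ + s ≤ s * D := by
          have h4 : s * (f γ + 1) ≤ s * D := Nat.mul_le_mul_left s (Nat.succ_le_of_lt hfγ)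
          rw [Nat.mul_add, Nat.mul_one] at h4
          exact h4
        omega
  rw [nsmul_eq_mul]
  exact_mod_cast key
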